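/- Let A be an m×n matrix over a field F that is (k,h,c)-rigid, and let k' = ⌈ck⌉. Then for every subset U of k rows of A, there exist ℓ = ⌈h/k'⌉ pairwise disjoint k'-subsets V_1,...,V_ℓ of columns and corresponding subsets U_1,...,U_ℓ ⊆ U of rows such that for each j, the k'×k' submatrix A_{U_j,V_j} has full rank k'. In particular, the union of the V_j has size at least h. -/

import Mathlib

open Matrix Submodule Module

section Helpers
variable {F : Type*} [Field F]

lemma rank_submatrix_equiv {ι κ ι' κ' : Type*} [Fintype κ] [Fintype κ']
    (M : Matrix ι κ F) (e₁ : ι' ≃ ι) (e₂ : κ' ≃ κ) :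
    (M.submatrix e₁ e₂).rank = M.rank := by
  rw [Matrix.rank, Matrix.rank, Matrix.mulVecLin_submatrix, LinearMap.range_comp,
    LinearMap.range_comp,
    show LinearMap.funLeft F F e₂.symm = LinearEquiv.funCongrLeft F F e₂.symm from rfl,
    LinearEquiv.range, Submodule.map_top,
    show LinearMap.funLeft F F e₁ = LinearEquiv.funCongrLeft F F e₁ from rfl,
    LinearEquiv.finrank_map_eq]

lemma exists_rows_linearIndependent {ι κ : Type*} [Fintype ι] [Fintype κ]
    (B : Matrix ι κ F) {r : ℕ} (hr : r ≤ B.rank) :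
    ∃ s : Finset ι, s.card = r ∧ LinearIndependent F (fun i : ↥s => B (i : ι)) := by
  classical
  obtain ⟨t, hts, hspan, hli⟩ := exists_linearIndependent F (Set.range B)
  have htfin : t.Finite := (Set.finite_range B).subset hts
  haveI : Fintype t := htfin.fintype
  have hcard : r ≤ t.toFinset.card := by
    have h1 : B.rank = finrank F (span F (Set.range B)) := B.rank_eq_finrank_span_row
    have h2 : finrank F (span F t) = t.toFinset.card := finrank_span_set_eq_card hli
    rw [h1, ← hspan, h2] at hr
    exact hr
  obtain ⟨t', ht't, ht'card⟩ := Finset.exists_subset_card_eq hcard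
  have hmem : ∀ v : ↥t', ∃ i, B i = (v : κ → F) := by
    intro v
    exact hts (Set.mem_toFinset.mp (ht't v.2))
  choose g hg using hmem
  have ginj : Function.Injective g := by
    intro a b hab
    have : (a : κ → F) = (b : κ → F) := by rw [← hg a, ← hg b, hab]
    exact Subtype.ext this
  refine ⟨t'.attach.image g, ?_, ?_⟩
  · rw [Finset.card_image_of_injective _ ginj, Finset.card_attach, ht'card]
  · have hBmem : ∀ i : ↥(t'.attach.image g), B (i : ι) ∈ t := by
      rintro ⟨i, hi⟩
      obtain ⟨v, -, rfl⟩ := Finset.mem_image.mp hi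
      rw [hg v]
      exact Set.mem_toFinset.mp (ht't v.2)
    set e : ↥(t'.attach.image g) → ↥t := fun i => ⟨B (i : ι), hBmem i⟩ with he
    have einj : Function.Injective e := by
      rintro ⟨a, ha⟩ ⟨b, hb⟩ hab
      have hBab : B a = B b := congrArg Subtype.val hab
      obtain ⟨va, -, rfl⟩ := Finset.mem_image.mp ha
      obtain ⟨vb, -, rfl⟩ := Finset.mem_image.mp hb
      have : (va : κ → F) = (vb : κ → F) := by rw [← hg va, ← hg vb, hBab]
      exact Subtype.ext (congrArg g (Subtype.ext this))
    exact hli.comp e einj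

lemma exists_square_submatrix {ι κ : Type*} [Fintype ι] [Fintype κ]
    (B : Matrix ι κ F) {r : ℕ} (hr : r ≤ B.rank) :
    ∃ (s : Finset ι) (t : Finset κ), s.card = r ∧ t.card = r ∧
      (B.submatrix (fun i : ↥s => (i : ι)) (fun j : ↥t => (j : κ))).rank = r := by
  obtain ⟨s, hscard, hli⟩ := exists_rows_linearIndependent B hr
  set B1 : Matrix ↥s κ F := B.submatrix (fun i : ↥s => (i : ι)) id with hB1def
  have hB1 : B1.rank = r := by
    have h := LinearIndependent.rank_matrix (M := B1) hli
    rwa [Fintype.card_coe, hscard] at h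
  have hT : r ≤ B1ᵀ.rank := by rw [B1.rank_transpose, hB1]
  obtain ⟨t, htcard, hli2⟩ := exists_rows_linearIndependent B1ᵀ hT
  refine ⟨s, t, hscard, htcard, ?_⟩
  have h2 : (B1ᵀ.submatrix (fun j : ↥t => (j : κ)) id).rank = r := by
    have h := LinearIndependent.rank_matrix (M := B1ᵀ.submatrix (fun j : ↥t => (j : κ)) id) hli2
    rwa [Fintype.card_coe, htcard] at h
  have heq : B.submatrix (fun i : ↥s => (i : ι)) (fun j : ↥t => (j : κ))
      = (B1ᵀ.submatrix (fun j : ↥t => (j : κ)) id)ᵀ := by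
    ext i j; rfl
  rw [heq, Matrix.rank_transpose, h2]

noncomputable def imgEquiv {α : Type*} [DecidableEq α] {P : Finset α} (s : Finset ↥P) :
    ↥s ≃ ↥(s.image Subtype.val) :=
  Equiv.ofBijective (fun x => ⟨x.1.1, Finset.mem_image_of_mem _ x.2⟩)
    ⟨by intro a b hab
        have h' := Subtype.mk.inj hab
        exact Subtype.ext (Subtype.ext h'),
     by rintro ⟨y, hy⟩
        obtain ⟨x, hx, hxy⟩ := Finset.mem_image.mp hy
        exact ⟨⟨x, hx⟩, Subtype.ext hxy⟩⟩

lemma rank_image_eq {ι κ : Type*} [Fintype ι] [Fintype κ] [DecidableEq ι] [DecidableEq κ]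
    (A : Matrix ι κ F) (P : Finset ι) (Q : Finset κ) (s : Finset ↥P) (t : Finset ↥Q) :
    (A.submatrix (fun i : ↥(s.image Subtype.val) => (i : ι))
        (fun j : ↥(t.image Subtype.val) => (j : κ))).rank
      = ((A.submatrix (fun i : ↥P => (i : ι)) (fun j : ↥Q => (j : κ))).submatrix
          (fun i : ↥s => (i : ↥P)) (fun j : ↥t => (j : ↥Q))).rank := by
  have heq : ((A.submatrix (fun i : ↥P => (i : ι)) (fun j : ↥Q => (j : κ))).submatrix
          (fun i : ↥s => (i : ↥P)) (fun j : ↥t => (j : ↥Q)))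
      = (A.submatrix (fun i : ↥(s.image Subtype.val) => (i : ι))
          (fun j : ↥(t.image Subtype.val) => (j : κ))).submatrix (imgEquiv s) (imgEquiv t) := by
    ext i j; rfl
  rw [heq, rank_submatrix_equiv]

end Helpers



/-- An `m × n` matrix `A` over a field is `(k, h, c)`-rigid if for every set `U` of `k` rows
and every set `W` of fewer than `h` columns, the submatrix of `A` consisting of rows `U` and
the columns outside `W` has rank at least `⌈c·k⌉`. -/
def Rigid {F : Type*} [Field F] {ι κ : Type*} [Fintype ι] [Fintype κ]
    [DecidableEq ι] [DecidableEq κ] (A : Matrix ι κ F) (k h : ℕ) (c : ℝ) : Prop :=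
  ∀ U : Finset ι, U.card = k → ∀ W : Finset κ, W.card < h →
    ⌈c * (k : ℝ)⌉₊ ≤ (A.submatrix (fun i : ↥U => (i : ι)) (fun j : ↥(Wᶜ) => (j : κ))).rank

/-- Partition lemma: for a `(k,h,c)`-rigid matrix and any set `U` of `k` rows, there are
`ℓ = ⌈h/k'⌉` pairwise disjoint `k'`-subsets of columns `V_1,…,V_ℓ` (where `k' = ⌈ck⌉`) and
subsets `U_1,…,U_ℓ ⊆ U` of rows such that each `k'×k'` submatrix `A_{U_j,V_j}` has full rank
`k'`; in particular the union of the `V_j` has size at least `h`. -/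
theorem stmt0 {F : Type*} [Field F] {m n k h : ℕ} {c : ℝ} (hc0 : 0 < c) (hc1 : c ≤ 1)
    (hk : 0 < k) (A : Matrix (Fin m) (Fin n) F) (hA : Rigid A k h c)
    (U : Finset (Fin m)) (hU : U.card = k) :
    ∃ (V : Fin ⌈(h : ℝ) / (⌈c * (k : ℝ)⌉₊ : ℝ)⌉₊ → Finset (Fin n))
      (Us : Fin ⌈(h : ℝ) / (⌈c * (k : ℝ)⌉₊ : ℝ)⌉₊ → Finset (Fin m)),
      (∀ i j, i ≠ j → Disjoint (V i) (V j)) ∧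
      (∀ j, (V j).card = ⌈c * (k : ℝ)⌉₊) ∧
      (∀ j, Us j ⊆ U) ∧
      (∀ j, (Us j).card = ⌈c * (k : ℝ)⌉₊) ∧
      (∀ j, (A.submatrix (fun i : ↥(Us j) => (i : Fin m))
          (fun i : ↥(V j) => (i : Fin n))).rank = ⌈c * (k : ℝ)⌉₊) ∧
      h ≤ (Finset.univ.biUnion V).card := by
  classical
  set k' := ⌈c * (k : ℝ)⌉₊ with hk'def
  have hck : (0 : ℝ) < c * (k : ℝ) := by positivity
  have hk' : 0 < k' := Nat.ceil_pos.2 hck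
  have hk'R : (0 : ℝ) < (k' : ℝ) := by exact_mod_cast hk'
  set ℓ := ⌈(h : ℝ) / (k' : ℝ)⌉₊ with hℓdef
  have key : ∀ t : ℕ, t ≤ ℓ →
      ∃ (V : Fin t → Finset (Fin n)) (Us : Fin t → Finset (Fin m)),
      (∀ i j, i ≠ j → Disjoint (V i) (V j)) ∧ (∀ j, (V j).card = k') ∧
      (∀ j, Us j ⊆ U) ∧ (∀ j, (Us j).card = k') ∧
      (∀ j, (A.submatrix (fun i : ↥(Us j) => (i : Fin m))
          (fun i : ↥(V j) => (i : Fin n))).rank = k') := by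
    intro t
    induction t with
    | zero => exact fun _ => ⟨Fin.elim0, Fin.elim0, fun i => i.elim0, fun j => j.elim0,
        fun j => j.elim0, fun j => j.elim0, fun j => j.elim0⟩
    | succ t ih =>
      intro hts
      obtain ⟨V, Us, hdis, hVc, hUsub, hUc, hrk⟩ := ih (Nat.le_of_succ_le hts)
      set W : Finset (Fin n) := Finset.univ.biUnion V with hWdef
      have hWcard : W.card = t * k' := by
        rw [hWdef, Finset.card_biUnion (fun i _ j _ hij => hdis i j hij)]
        simp [hVc, Finset.sum_const, Finset.card_univ, mul_comm]
      have hWlt : W.card < h := by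
        have h1 : (t : ℝ) < (h : ℝ) / (k' : ℝ) := Nat.lt_ceil.mp hts
        have h2 : (t : ℝ) * (k' : ℝ) < (h : ℝ) := (lt_div_iff₀ hk'R).mp h1
        rw [hWcard]
        exact_mod_cast h2
      have hrank := hA U hU W hWlt
      obtain ⟨s, tt, hs, htt, hr2⟩ := exists_square_submatrix _ hrank
      have hVsub : (tt.image Subtype.val) ⊆ Wᶜ := by
        intro x hx
        obtain ⟨v, -, rfl⟩ := Finset.mem_image.mp hx
        exact v.2
      refine ⟨Fin.snoc V (tt.image Subtype.val), Fin.snoc (α := fun _ => Finset (Fin m)) Us (s.image Subtype.val),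
        ?_, ?_, ?_, ?_, ?_⟩
      · intro i j hij
        have hnew : ∀ j' : Fin t, Disjoint (tt.image Subtype.val) (V j') := by
          intro j'
          rw [Finset.disjoint_left]
          intro a ha haV
          have haW : a ∈ W := Finset.mem_biUnion.mpr ⟨j', Finset.mem_univ _, haV⟩
          exact (Finset.mem_compl.mp (hVsub ha)) haW
        rcases Fin.eq_castSucc_or_eq_last i with ⟨i', rfl⟩ | rfl <;>
          rcases Fin.eq_castSucc_or_eq_last j with ⟨j', rfl⟩ | rfl
        · simp only [Fin.snoc_castSucc]
          exact hdis i' j' (fun hh => hij (congrArg Fin.castSucc hh))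
        · simp only [Fin.snoc_last, Fin.snoc_castSucc]
          exact (hnew i').symm
        · simp only [Fin.snoc_last, Fin.snoc_castSucc]
          exact hnew j'
        · exact absurd rfl hij
      · intro j
        rcases Fin.eq_castSucc_or_eq_last j with ⟨j', rfl⟩ | rfl
        · simp only [Fin.snoc_castSucc]; exact hVc j'
        · simp only [Fin.snoc_last]
          rw [Finset.card_image_of_injective _ Subtype.val_injective, htt]
      · intro j
        rcases Fin.eq_castSucc_or_eq_last j with ⟨j', rfl⟩ | rfl
        · simp only [Fin.snoc_castSucc]; exact hUsub j'
        · simp only [Fin.snoc_last]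
          intro x hx
          obtain ⟨v, -, rfl⟩ := Finset.mem_image.mp hx
          exact v.2
      · intro j
        rcases Fin.eq_castSucc_or_eq_last j with ⟨j', rfl⟩ | rfl
        · simp only [Fin.snoc_castSucc]; exact hUc j'
        · simp only [Fin.snoc_last]
          rw [Finset.card_image_of_injective _ Subtype.val_injective, hs]
      · intro j
        rcases Fin.eq_castSucc_or_eq_last j with ⟨j', rfl⟩ | rfl
        · have e1 : Fin.snoc (α := fun _ => Finset (Fin m)) Us (s.image Subtype.val) j'.castSucc = Us j' := by simp
          have e2 : Fin.snoc (α := fun _ => Finset (Fin n)) V (tt.image Subtype.val) j'.castSucc = V j' := by simp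
          rw [e1, e2]
          exact hrk j'
        · have e1 : Fin.snoc (α := fun _ => Finset (Fin m)) Us (s.image Subtype.val) (Fin.last t) = s.image Subtype.val := by
            simp
          have e2 : Fin.snoc (α := fun _ => Finset (Fin n)) V (tt.image Subtype.val) (Fin.last t) = tt.image Subtype.val := by
            simp
          rw [e1, e2, rank_image_eq A U Wᶜ s tt]
          exact hr2
  obtain ⟨V, Us, hdis, hVc, hUsub, hUc, hrk⟩ := key ℓ le_rfl
  refine ⟨V, Us, hdis, hVc, hUsub, hUc, hrk, ?_⟩
  have hcard : (Finset.univ.biUnion V).card = ℓ * k' := by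
    rw [Finset.card_biUnion (fun i _ j _ hij => hdis i j hij)]
    simp [hVc, Finset.sum_const, Finset.card_univ, mul_comm]
  rw [hcard]
  have h1 : (h : ℝ) / (k' : ℝ) ≤ (ℓ : ℝ) := Nat.le_ceil _
  have h2 : (h : ℝ) ≤ (ℓ : ℝ) * (k' : ℝ) := (div_le_iff₀ hk'R).mp h1
  exact_mod_cast h2
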